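/- Define S(n) = Σ_{j=0}^{n} 3ʲ · C(3n-j, 2n) for nonnegative integers n. Then for every nonnegative integer n, -27·S(n) + 4·S(n+1) = -3 · (3n+1)! / ((2n+1)! · (n+1)!), where the identity is stated in the rationals ℚ. -/

import Mathlib

/-- Zeilberger certificate function for the Ruehr sum recurrence. -/
noncomputable def ruehrG (n i : ℕ) : ℚ :=
  3 ^ i * (Nat.factorial (3 * n + 1 - i) : ℚ) *
      (9 * (n : ℚ) ^ 2 + 12 * n + 3 - (27 * (n : ℚ) ^ 2 + 36 * n + 11) * i
        + (12 * (n : ℚ) + 9) * i ^ 2 - (i : ℚ) ^ 3) /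
    ((Nat.factorial (2 * n + 1) : ℚ) * (Nat.factorial (n + 1 - i) : ℚ) * ((n : ℚ) + 1)
      * ((3 * (n : ℚ) + 1) - i))

set_option maxHeartbeats 2000000 in
lemma ruehr_step (j d : ℕ) (h : 1 ≤ j + d) :
    -27 * ((3 : ℚ) ^ j * (Nat.choose (3 * (j + d) - j) (2 * (j + d)) : ℚ))
      + 4 * ((3 : ℚ) ^ j * (Nat.choose (3 * (j + d + 1) - j) (2 * (j + d + 1)) : ℚ))
    = ruehrG (j + d) (j + 1) - ruehrG (j + d) j := by
  have h1 : 3 * (j + d) - j = 2 * j + 3 * d := by omega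
  have h2 : 3 * (j + d + 1) - j = 2 * j + 3 * d + 3 := by omega
  have h3 : 2 * (j + d + 1) = 2 * j + 2 * d + 2 := by omega
  have h4 : 2 * (j + d) = 2 * j + 2 * d := by omega
  have h5 : 3 * (j + d) + 1 - (j + 1) = 2 * j + 3 * d := by omega
  have h6 : (j + d) + 1 - (j + 1) = d := by omega
  have h7 : 3 * (j + d) + 1 - j = 2 * j + 3 * d + 1 := by omega
  have h8 : (j + d) + 1 - j = d + 1 := by omega
  rw [h1, h2, h3, h4]
  unfold ruehrG
  rw [h5, h6, h7, h8]
  rw [Nat.cast_choose ℚ (show 2 * j + 2 * d ≤ 2 * j + 3 * d by omega),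
    Nat.cast_choose ℚ (show 2 * j + 2 * d + 2 ≤ 2 * j + 3 * d + 3 by omega)]
  rw [show 2 * j + 3 * d - (2 * j + 2 * d) = d by omega,
    show 2 * j + 3 * d + 3 - (2 * j + 2 * d + 2) = d + 1 by omega]
  have e1 : (Nat.factorial (2 * j + 3 * d + 3) : ℚ)
      = ((2 * j + 3 * d + 3 : ℕ) : ℚ) * ((2 * j + 3 * d + 2 : ℕ) : ℚ)
        * ((2 * j + 3 * d + 1 : ℕ) : ℚ) * (Nat.factorial (2 * j + 3 * d) : ℚ) := by
    rw [show 2 * j + 3 * d + 3 = (2 * j + 3 * d + 2) + 1 by ring, Nat.factorial_succ,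
      show 2 * j + 3 * d + 2 = (2 * j + 3 * d + 1) + 1 by ring, Nat.factorial_succ,
      Nat.factorial_succ]
    push_cast
    ring
  have e2 : (Nat.factorial (2 * j + 2 * d + 2) : ℚ)
      = ((2 * j + 2 * d + 2 : ℕ) : ℚ) * ((2 * j + 2 * d + 1 : ℕ) : ℚ)
        * (Nat.factorial (2 * j + 2 * d) : ℚ) := by
    rw [show 2 * j + 2 * d + 2 = (2 * j + 2 * d + 1) + 1 by ring, Nat.factorial_succ,
      Nat.factorial_succ]
    push_cast
    ring
  have e3 : (Nat.factorial (2 * j + 2 * d + 1) : ℚ)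
      = ((2 * j + 2 * d + 1 : ℕ) : ℚ) * (Nat.factorial (2 * j + 2 * d) : ℚ) := by
    rw [Nat.factorial_succ]
    push_cast
    ring
  have e4 : (Nat.factorial (d + 1) : ℚ) = ((d : ℚ) + 1) * (Nat.factorial d : ℚ) := by
    rw [Nat.factorial_succ]
    push_cast
    ring
  have e5 : (Nat.factorial (2 * j + 3 * d + 1) : ℚ)
      = ((2 * j + 3 * d + 1 : ℕ) : ℚ) * (Nat.factorial (2 * j + 3 * d) : ℚ) := by
    rw [Nat.factorial_succ]
    push_cast
    ring
  have hf1 : (Nat.factorial (2 * j + 3 * d) : ℚ) ≠ 0 := by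
    exact_mod_cast Nat.factorial_ne_zero _
  have hf2 : (Nat.factorial (2 * j + 2 * d) : ℚ) ≠ 0 := by
    exact_mod_cast Nat.factorial_ne_zero _
  have hf3 : (Nat.factorial d : ℚ) ≠ 0 := by
    exact_mod_cast Nat.factorial_ne_zero _
  have hz1 : ((2 * j + 3 * d : ℚ)) ≠ 0 := by
    have : (0 : ℚ) < 2 * (j : ℚ) + 3 * (d : ℚ) := by
      have hj : (0 : ℚ) ≤ (j : ℚ) := by positivity
      have hd : (0 : ℚ) ≤ (d : ℚ) := by positivity
      rcases Nat.lt_or_ge j 1 with hj0 | hj1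
      · have : j = 0 := by omega
        subst this
        have : 1 ≤ d := by omega
        have : (1 : ℚ) ≤ (d : ℚ) := by exact_mod_cast this
        nlinarith
      · have : (1 : ℚ) ≤ (j : ℚ) := by exact_mod_cast hj1
        nlinarith
    linarith
  have hz2 : ((2 : ℚ) * j + 3 * d + 1) ≠ 0 := by positivity
  have hz3 : ((2 : ℚ) * j + 2 * d + 1) ≠ 0 := by positivity
  have hz4 : ((j : ℚ) + d + 1) ≠ 0 := by positivity
  have hz5 : ((d : ℚ) + 1) ≠ 0 := by positivity
  rw [e1, e2, e4, e5, show 2 * (j + d) + 1 = 2 * j + 2 * d + 1 by ring, e3]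
  push_cast
  rw [show 3 * ((j : ℚ) + d) + 1 - ((j : ℚ) + 1) = 2 * j + 3 * d by ring,
    show 3 * ((j : ℚ) + d) + 1 - (j : ℚ) = 2 * j + 3 * d + 1 by ring]
  field_simp
  ring

theorem ruehr_S_recurrence (S : ℕ → ℚ)
    (hS : ∀ n : ℕ, S n = ∑ j ∈ Finset.range (n + 1), (3 : ℚ) ^ j * (Nat.choose (3 * n - j) (2 * n) : ℚ)) :
    ∀ n : ℕ, -27 * S n + 4 * S (n + 1) =
      -3 * (Nat.factorial (3 * n + 1) : ℚ) /
        ((Nat.factorial (2 * n + 1) : ℚ) * (Nat.factorial (n + 1) : ℚ)) := by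
  intro n
  rcases Nat.eq_zero_or_pos n with h0 | hpos
  · subst h0
    rw [hS 0, hS 1]
    simp [Finset.sum_range_succ]
    norm_num [Nat.factorial]
  · -- main case, n ≥ 1
    have key : ∑ j ∈ Finset.range (n + 1),
        (-27 * ((3 : ℚ) ^ j * (Nat.choose (3 * n - j) (2 * n) : ℚ))
          + 4 * ((3 : ℚ) ^ j * (Nat.choose (3 * (n + 1) - j) (2 * (n + 1)) : ℚ)))
        = ruehrG n (n + 1) - ruehrG n 0 := by
      rw [← Finset.sum_range_sub (fun i => ruehrG n i) (n + 1)]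
      apply Finset.sum_congr rfl
      intro j hj
      have hj' : j ≤ n := Nat.lt_succ_iff.mp (Finset.mem_range.mp hj)
      obtain ⟨d, rfl⟩ : ∃ d, n = j + d := ⟨n - j, by omega⟩
      exact ruehr_step j d (by omega)
    have hG0 : ruehrG n 0 = 3 * (Nat.factorial (3 * n + 1) : ℚ) /
        ((Nat.factorial (2 * n + 1) : ℚ) * (Nat.factorial (n + 1) : ℚ)) := by
      unfold ruehrG
      rw [Nat.sub_zero, Nat.sub_zero]
      have hz1 : ((n : ℚ) + 1) ≠ 0 := by positivity
      have hz2 : ((3 : ℚ) * n + 1) ≠ 0 := by positivity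
      have hf1 : (Nat.factorial (2 * n + 1) : ℚ) ≠ 0 := by
        exact_mod_cast Nat.factorial_ne_zero _
      have hf2 : (Nat.factorial (n + 1) : ℚ) ≠ 0 := by
        exact_mod_cast Nat.factorial_ne_zero _
      push_cast
      field_simp
      ring_nf
      have hz3 : (1 + (n : ℚ) * 3) ≠ 0 := by positivity
      field_simp
      ring
    have hGtop : ruehrG n (n + 1) = -4 * 3 ^ (n + 1) := by
      unfold ruehrG
      rw [show 3 * n + 1 - (n + 1) = 2 * n by omega, show n + 1 - (n + 1) = 0 by omega]
      have e3 : (Nat.factorial (2 * n + 1) : ℚ)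
          = ((2 * n + 1 : ℕ) : ℚ) * (Nat.factorial (2 * n) : ℚ) := by
        rw [Nat.factorial_succ]
        push_cast
        ring
      have hz1 : ((n : ℚ) + 1) ≠ 0 := by positivity
      have hn1 : (1 : ℚ) ≤ (n : ℚ) := by exact_mod_cast hpos
      have hz2 : ((2 : ℚ) * n + 1) ≠ 0 := by positivity
      have hz3 : ((2 : ℚ) * n) ≠ 0 := by nlinarith
      have hf1 : (Nat.factorial (2 * n) : ℚ) ≠ 0 := by
        exact_mod_cast Nat.factorial_ne_zero _
      rw [e3]
      push_cast
      rw [show (3 : ℚ) * n + 1 - (n + 1) = 2 * n by ring]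
      rw [Nat.factorial_zero]
      field_simp
      ring
    rw [hS n, hS (n + 1),
      Finset.sum_range_succ (fun j => (3 : ℚ) ^ j * (Nat.choose (3 * (n + 1) - j) (2 * (n + 1)) : ℚ)) (n + 1)]
    rw [show 3 * (n + 1) - (n + 1) = 2 * (n + 1) by omega, Nat.choose_self]
    have expand : ∑ j ∈ Finset.range (n + 1),
        (-27 * ((3 : ℚ) ^ j * (Nat.choose (3 * n - j) (2 * n) : ℚ))
          + 4 * ((3 : ℚ) ^ j * (Nat.choose (3 * (n + 1) - j) (2 * (n + 1)) : ℚ)))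
        = -27 * (∑ j ∈ Finset.range (n + 1), (3 : ℚ) ^ j * (Nat.choose (3 * n - j) (2 * n) : ℚ))
          + 4 * (∑ j ∈ Finset.range (n + 1), (3 : ℚ) ^ j * (Nat.choose (3 * (n + 1) - j) (2 * (n + 1)) : ℚ)) := by
      rw [Finset.sum_add_distrib, ← Finset.mul_sum, ← Finset.mul_sum]
    have h2 := expand.symm.trans key
    rw [hG0, hGtop] at h2
    push_cast at h2 ⊢
    linear_combination h2
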